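/- Let d ≥ 1, let μ be the Haar probability measure on the unitary group U(d) = Matrix.unitaryGroup (Fin d) ℂ, let e ∈ ℂ^d be a unit vector (ℓ² norm), and write ξ_U := U *ᵥ e. Let O be a Hermitian d×d complex matrix, ψ ∈ ℂ^d a unit vector, ε ∈ [0,1], and set ψ̃_U := √(1−ε) • ψ + √ε • ξ_U. Then ∫_{U(d)} re⟨ψ̃_U, O *ᵥ ψ̃_U⟩ dμ(U) = (1−ε)·re⟨ψ, O *ᵥ ψ⟩ + ε·(re Tr O)/d, with ⟨v, w⟩ := ∑_i conj(v i)·(w i). In particular, if ψ is a unit eigenvector of O with real eigenvalue E, the expected energy of the perturbed state is (1−ε)·E + ε·(re Tr O)/d. -/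

import Mathlib

open MeasureTheory Matrix

set_option linter.unusedSectionVars false

/-- The standard inner product `⟨v, w⟩ = ∑ i, conj (v i) * w i` on `ℂ^d`. -/
noncomputable def cip {d : ℕ} (v w : Fin d → ℂ) : ℂ :=
  ∑ i, (starRingEnd ℂ) (v i) * w i

namespace Stmt15Aux

variable {d : ℕ}

lemma permU (σ : Equiv.Perm (Fin d)) :
    (σ.permMatrix ℂ) ∈ Matrix.unitaryGroup (Fin d) ℂ := by
  have hP : ∀ (τ : Equiv.Perm (Fin d)) i j, τ.permMatrix ℂ i j = if τ i = j then 1 else 0 := by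
    intro τ i j
    simp [Equiv.Perm.permMatrix, PEquiv.toMatrix_apply, Equiv.toPEquiv]
  have hmul : ∀ (τ : Equiv.Perm (Fin d)), (τ⁻¹).permMatrix ℂ * τ.permMatrix ℂ = 1 := by
    intro τ
    ext a b
    rw [Matrix.mul_apply]
    simp only [hP]
    rw [Finset.sum_eq_single (τ⁻¹ a)]
    · simp [Matrix.one_apply, Equiv.eq_symm_apply, eq_comm]
    · intro c _ hc
      rw [if_neg, zero_mul]
      exact fun h => hc (by simpa [Equiv.eq_symm_apply] using h.symm)
    · simp
  have hs : ∀ (τ : Equiv.Perm (Fin d)), star (τ.permMatrix ℂ) = (τ⁻¹).permMatrix ℂ := by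
    intro τ
    ext a b
    simp only [Matrix.star_apply, Matrix.conjTranspose_apply, hP]
    by_cases h : τ b = a
    · rw [if_pos h, if_pos (by simp [← h]), star_one]
    · rw [if_neg h, if_neg (fun h2 => h (by simp [← h2])), star_zero]
  refine ⟨by rw [hs, hmul], ?_⟩
  rw [hs]
  have := hmul σ⁻¹
  simpa using this

lemma permMulVec (σ : Equiv.Perm (Fin d)) (v : Fin d → ℂ) (k : Fin d) :
    (σ.permMatrix ℂ *ᵥ v) k = v (σ k) := by
  simp [Equiv.Perm.permMatrix, PEquiv.toMatrix, Matrix.mulVec, dotProduct, Equiv.toPEquiv]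

lemma diagU (i : Fin d) :
    (Matrix.diagonal (fun k => if k = i then (-1:ℂ) else 1)) ∈ Matrix.unitaryGroup (Fin d) ℂ := by
  have h : Matrix.diagonal (fun k => if k = i then (-1:ℂ) else 1) *
      Matrix.diagonal (fun k => if k = i then (-1:ℂ) else 1) = 1 := by
    rw [Matrix.diagonal_mul_diagonal, ← Matrix.diagonal_one]
    have : (fun k => (if k = i then (-1:ℂ) else 1) * (if k = i then (-1:ℂ) else 1))
        = fun _ => (1:ℂ) := by funext k; split <;> ring
    rw [this]
  have hs : star (Matrix.diagonal (fun k => if k = i then (-1:ℂ) else 1)) =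
      Matrix.diagonal (fun k => if k = i then (-1:ℂ) else 1) := by
    rw [Matrix.star_eq_conjTranspose, Matrix.diagonal_conjTranspose]
    have : (star fun k => if k = i then (-1:ℂ) else 1)
        = fun k => if k = i then (-1:ℂ) else 1 := by
      funext k; simp only [Pi.star_apply]; split <;> simp
    rw [this]
  exact ⟨by rw [hs, h], by rw [hs, h]⟩

lemma negU : (-1 : Matrix (Fin d) (Fin d) ℂ) ∈ Matrix.unitaryGroup (Fin d) ℂ := by
  constructor <;> simp

/-- cip invariance under unitary. -/
lemma cip_mulVec (A : Matrix (Fin d) (Fin d) ℂ) (hA : Aᴴ * A = 1) (v w : Fin d → ℂ) :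
    cip (A *ᵥ v) (A *ᵥ w) = cip v w := by
  have : star (A *ᵥ v) ⬝ᵥ (A *ᵥ w) = star v ⬝ᵥ w := by
    rw [star_mulVec, dotProduct_mulVec, vecMul_vecMul, hA, vecMul_one]
  simpa [cip, dotProduct, Matrix.star_apply] using this

lemma cip_self (v : Fin d → ℂ) : cip v v = ((∑ i, ‖v i‖ ^ 2 : ℝ) : ℂ) := by
  rw [cip]
  push_cast
  refine Finset.sum_congr rfl fun i _ => ?_
  rw [mul_comm, Complex.mul_conj']


noncomputable def xi (e : Fin d → ℂ) (U : Matrix.unitaryGroup (Fin d) ℂ) : Fin d → ℂ :=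
  (U : Matrix (Fin d) (Fin d) ℂ) *ᵥ e

section Meas

variable [MeasurableSpace (Matrix.unitaryGroup (Fin d) ℂ)]
  [BorelSpace (Matrix.unitaryGroup (Fin d) ℂ)]
  (μ : Measure (Matrix.unitaryGroup (Fin d) ℂ)) [μ.IsHaarMeasure] [IsProbabilityMeasure μ]

lemma xi_norm (e : Fin d → ℂ) (U : Matrix.unitaryGroup (Fin d) ℂ) :
    cip (xi e U) (xi e U) = cip e e :=
  cip_mulVec _ (by simpa [Matrix.star_eq_conjTranspose] using U.prop.1) e e

lemma xi_bound (e : Fin d → ℂ) (he : ∑ i, ‖e i‖ ^ 2 = 1)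
    (U : Matrix.unitaryGroup (Fin d) ℂ) (j : Fin d) : ‖xi e U j‖ ≤ 1 := by
  have h1 : ((∑ i, ‖xi e U i‖ ^ 2 : ℝ) : ℂ) = ((1:ℝ) : ℂ) := by
    rw [← cip_self, xi_norm, cip_self, he]
  have h2 : (∑ i, ‖xi e U i‖ ^ 2 : ℝ) = 1 := by exact_mod_cast h1
  have h3 : ‖xi e U j‖ ^ 2 ≤ 1 := by
    rw [← h2]
    exact Finset.single_le_sum (f := fun i => ‖xi e U i‖ ^ 2) (fun i _ => sq_nonneg _)
      (Finset.mem_univ j)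
  nlinarith [norm_nonneg (xi e U j)]

lemma xi_continuous (e : Fin d → ℂ) (j : Fin d) :
    Continuous fun U : Matrix.unitaryGroup (Fin d) ℂ => xi e U j := by
  have : Continuous fun U : Matrix.unitaryGroup (Fin d) ℂ =>
      (U : Matrix (Fin d) (Fin d) ℂ) := continuous_subtype_val
  unfold xi Matrix.mulVec dotProduct
  exact continuous_finset_sum _ fun k _ =>
    (((continuous_apply k).comp ((continuous_apply j).comp this)).mul continuous_const)

lemma integrable_of_bound (f : Matrix.unitaryGroup (Fin d) ℂ → ℂ) (hf : Continuous f)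
    (C : ℝ) (h : ∀ U, ‖f U‖ ≤ C) : Integrable f μ :=
  (integrable_const C).mono' hf.aestronglyMeasurable (Filter.Eventually.of_forall h)

lemma integrable_xi (e : Fin d → ℂ) (he : ∑ i, ‖e i‖ ^ 2 = 1) (j : Fin d) :
    Integrable (fun U => xi e U j) μ :=
  integrable_of_bound μ _ (xi_continuous e j) 1 (fun U => xi_bound e he U j)

lemma integrable_xi_conj (e : Fin d → ℂ) (he : ∑ i, ‖e i‖ ^ 2 = 1) (j : Fin d) :
    Integrable (fun U => (starRingEnd ℂ) (xi e U j)) μ :=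
  integrable_of_bound μ _ (Complex.continuous_conj.comp (xi_continuous e j)) 1
    (fun U => by simpa using xi_bound e he U j)

lemma integrable_xi_mul (e : Fin d → ℂ) (he : ∑ i, ‖e i‖ ^ 2 = 1) (i j : Fin d) :
    Integrable (fun U => (starRingEnd ℂ) (xi e U i) * xi e U j) μ := by
  refine integrable_of_bound μ _
    ((Complex.continuous_conj.comp (xi_continuous e i)).mul (xi_continuous e j)) 1 fun U => ?_
  rw [norm_mul]
  calc ‖(starRingEnd ℂ) (xi e U i)‖ * ‖xi e U j‖ ≤ 1 * 1 := by
        apply mul_le_mul _ (xi_bound e he U j) (norm_nonneg _) zero_le_one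
        simpa using xi_bound e he U i
    _ = 1 := by ring

lemma integral_shift (e : Fin d → ℂ) (f : (Fin d → ℂ) → ℂ) (V : Matrix.unitaryGroup (Fin d) ℂ) :
    ∫ U, f ((V : Matrix (Fin d) (Fin d) ℂ) *ᵥ xi e U) ∂μ = ∫ U, f (xi e U) ∂μ := by
  have h := integral_mul_left_eq_self (μ := μ) (fun U => f (xi e U)) V
  rw [← h]
  refine integral_congr_ae (Filter.Eventually.of_forall fun U => ?_)
  simp [xi, Matrix.mulVec_mulVec]

lemma integral_xi_zero (e : Fin d → ℂ) (j : Fin d) : ∫ U, xi e U j ∂μ = 0 := by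
  have h := integral_shift μ e (fun v => v j) ⟨-1, negU⟩
  have h2 : ∀ U, ((↑(⟨-1, negU⟩ : Matrix.unitaryGroup (Fin d) ℂ) :
      Matrix (Fin d) (Fin d) ℂ) *ᵥ xi e U) j = -(xi e U j) := by
    intro U
    rw [show (↑(⟨-1, negU⟩ : Matrix.unitaryGroup (Fin d) ℂ) :
        Matrix (Fin d) (Fin d) ℂ) = -1 from rfl, Matrix.neg_mulVec, Matrix.one_mulVec]
    simp
  have h3 : ∫ U, -(xi e U j) ∂μ = ∫ U, xi e U j ∂μ := by
    rw [← h]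
    exact integral_congr_ae (Filter.Eventually.of_forall fun U => (h2 U).symm)
  rw [integral_neg] at h3
  exact neg_eq_self.mp h3

lemma integral_xi_conj_zero (e : Fin d → ℂ) (j : Fin d) :
    ∫ U, (starRingEnd ℂ) (xi e U j) ∂μ = 0 := by
  rw [integral_conj, integral_xi_zero, map_zero]

lemma integral_xi_off (e : Fin d → ℂ) {i j : Fin d} (hij : i ≠ j) :
    ∫ U, (starRingEnd ℂ) (xi e U i) * xi e U j ∂μ = 0 := by
  set V : Matrix.unitaryGroup (Fin d) ℂ :=
    ⟨Matrix.diagonal (fun k => if k = i then (-1:ℂ) else 1), diagU i⟩ with hV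
  have h := integral_shift μ e (fun v => (starRingEnd ℂ) (v i) * v j) V
  have h2 : ∀ U, (starRingEnd ℂ) (((V : Matrix (Fin d) (Fin d) ℂ) *ᵥ xi e U) i) *
      ((V : Matrix (Fin d) (Fin d) ℂ) *ᵥ xi e U) j
      = -((starRingEnd ℂ) (xi e U i) * xi e U j) := by
    intro U
    rw [show (V : Matrix (Fin d) (Fin d) ℂ)
        = Matrix.diagonal (fun k => if k = i then (-1:ℂ) else 1) from rfl,
      Matrix.mulVec_diagonal, Matrix.mulVec_diagonal, if_pos rfl, if_neg (Ne.symm hij)]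
    simp
  have h3 : ∫ U, -((starRingEnd ℂ) (xi e U i) * xi e U j) ∂μ
      = ∫ U, (starRingEnd ℂ) (xi e U i) * xi e U j ∂μ := by
    rw [← h]
    exact integral_congr_ae (Filter.Eventually.of_forall fun U => (h2 U).symm)
  rw [integral_neg] at h3
  exact neg_eq_self.mp h3

lemma integral_xi_diag_eq (e : Fin d → ℂ) (i i' : Fin d) :
    ∫ U, (starRingEnd ℂ) (xi e U i) * xi e U i ∂μ
      = ∫ U, (starRingEnd ℂ) (xi e U i') * xi e U i' ∂μ := by
  set V : Matrix.unitaryGroup (Fin d) ℂ := ⟨(Equiv.swap i i').permMatrix ℂ, permU _⟩ with hV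
  have h := integral_shift μ e (fun v => (starRingEnd ℂ) (v i) * v i) V
  rw [← h]
  refine integral_congr_ae (Filter.Eventually.of_forall fun U => ?_)
  have h2 : ∀ k, ((V : Matrix (Fin d) (Fin d) ℂ) *ᵥ xi e U) k = xi e U ((Equiv.swap i i') k) :=
    fun k => permMulVec _ _ k
  simp only [h2, Equiv.swap_apply_left]

lemma integral_xi_diag (hd : 1 ≤ d) (e : Fin d → ℂ) (he : ∑ i, ‖e i‖ ^ 2 = 1) (i : Fin d) :
    ∫ U, (starRingEnd ℂ) (xi e U i) * xi e U i ∂μ = 1 / (d : ℂ) := by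
  have hsum : ∑ i' : Fin d, ∫ U, (starRingEnd ℂ) (xi e U i') * xi e U i' ∂μ = 1 := by
    rw [← integral_finset_sum _ (fun i' _ => integrable_xi_mul μ e he i' i')]
    have hpt : ∀ U : Matrix.unitaryGroup (Fin d) ℂ,
        (∑ i' : Fin d, (starRingEnd ℂ) (xi e U i') * xi e U i') = 1 := by
      intro U
      have h1 := xi_norm e U
      rw [cip_self, cip_self, he] at h1
      have h2 : (∑ i', ‖xi e U i'‖ ^ 2 : ℝ) = 1 := by exact_mod_cast h1
      rw [show (∑ i' : Fin d, (starRingEnd ℂ) (xi e U i') * xi e U i')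
          = cip (xi e U) (xi e U) from rfl, cip_self, h2, Complex.ofReal_one]
    rw [integral_congr_ae (Filter.Eventually.of_forall hpt)]
    simp
  have hall : ∀ i' : Fin d, ∫ U, (starRingEnd ℂ) (xi e U i') * xi e U i' ∂μ
      = ∫ U, (starRingEnd ℂ) (xi e U i) * xi e U i ∂μ :=
    fun i' => integral_xi_diag_eq μ e i' i
  rw [Finset.sum_congr rfl (fun i' _ => hall i'), Finset.sum_const, Finset.card_univ,
    Fintype.card_fin, nsmul_eq_mul] at hsum
  have hd0 : (d : ℂ) ≠ 0 := by
    exact_mod_cast Nat.cast_ne_zero.2 (by omega)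
  field_simp
  linear_combination hsum

lemma cip_rep_left (ψ : Fin d → ℂ) (O : Matrix (Fin d) (Fin d) ℂ) (v : Fin d → ℂ) :
    cip ψ (O *ᵥ v) = ∑ i, ∑ j, ((starRingEnd ℂ) (ψ i) * O i j) * v j := by
  unfold cip Matrix.mulVec dotProduct
  refine Finset.sum_congr rfl fun i _ => ?_
  rw [Finset.mul_sum]
  exact Finset.sum_congr rfl fun j _ => by ring

lemma cip_rep_right (ψ : Fin d → ℂ) (O : Matrix (Fin d) (Fin d) ℂ) (v : Fin d → ℂ) :
    cip v (O *ᵥ ψ) = ∑ i, (O *ᵥ ψ) i * (starRingEnd ℂ) (v i) := by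
  unfold cip
  exact Finset.sum_congr rfl fun i _ => by ring

lemma cip_rep_both (O : Matrix (Fin d) (Fin d) ℂ) (v : Fin d → ℂ) :
    cip v (O *ᵥ v) = ∑ i, ∑ j, O i j * ((starRingEnd ℂ) (v i) * v j) := by
  rw [cip_rep_left]
  exact Finset.sum_congr rfl fun i _ => Finset.sum_congr rfl fun j _ => by ring

lemma integral_cip_left (e : Fin d → ℂ) (he : ∑ i, ‖e i‖ ^ 2 = 1)
    (ψ : Fin d → ℂ) (O : Matrix (Fin d) (Fin d) ℂ) :
    ∫ U, cip ψ (O *ᵥ xi e U) ∂μ = 0 := by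
  have hrep : ∀ U, cip ψ (O *ᵥ xi e U)
      = ∑ i, ∑ j, ((starRingEnd ℂ) (ψ i) * O i j) * xi e U j :=
    fun U => cip_rep_left ψ O (xi e U)
  rw [integral_congr_ae (Filter.Eventually.of_forall hrep),
    integral_finset_sum _ (fun i _ => integrable_finset_sum _
      (fun j _ => Integrable.const_mul (integrable_xi μ e he j) _))]
  refine Finset.sum_eq_zero fun i _ => ?_
  rw [integral_finset_sum _ (fun j _ => Integrable.const_mul (integrable_xi μ e he j) _)]
  refine Finset.sum_eq_zero fun j _ => ?_
  rw [integral_const_mul, integral_xi_zero, mul_zero]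

lemma integrable_cip_left (e : Fin d → ℂ) (he : ∑ i, ‖e i‖ ^ 2 = 1)
    (ψ : Fin d → ℂ) (O : Matrix (Fin d) (Fin d) ℂ) :
    Integrable (fun U => cip ψ (O *ᵥ xi e U)) μ := by
  rw [show (fun U => cip ψ (O *ᵥ xi e U))
      = fun U => ∑ i, ∑ j, ((starRingEnd ℂ) (ψ i) * O i j) * xi e U j from
    funext fun U => cip_rep_left ψ O (xi e U)]
  exact integrable_finset_sum _ (fun i _ => integrable_finset_sum _
    (fun j _ => Integrable.const_mul (integrable_xi μ e he j) _))

lemma integral_cip_right (e : Fin d → ℂ) (he : ∑ i, ‖e i‖ ^ 2 = 1)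
    (ψ : Fin d → ℂ) (O : Matrix (Fin d) (Fin d) ℂ) :
    ∫ U, cip (xi e U) (O *ᵥ ψ) ∂μ = 0 := by
  have hrep : ∀ U, cip (xi e U) (O *ᵥ ψ)
      = ∑ i, (O *ᵥ ψ) i * (starRingEnd ℂ) (xi e U i) :=
    fun U => cip_rep_right ψ O (xi e U)
  rw [integral_congr_ae (Filter.Eventually.of_forall hrep),
    integral_finset_sum _ (fun i _ => Integrable.const_mul (integrable_xi_conj μ e he i) _)]
  refine Finset.sum_eq_zero fun i _ => ?_
  rw [integral_const_mul, integral_xi_conj_zero, mul_zero]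

lemma integrable_cip_right (e : Fin d → ℂ) (he : ∑ i, ‖e i‖ ^ 2 = 1)
    (ψ : Fin d → ℂ) (O : Matrix (Fin d) (Fin d) ℂ) :
    Integrable (fun U => cip (xi e U) (O *ᵥ ψ)) μ := by
  rw [show (fun U => cip (xi e U) (O *ᵥ ψ))
      = fun U => ∑ i, (O *ᵥ ψ) i * (starRingEnd ℂ) (xi e U i) from
    funext fun U => cip_rep_right ψ O (xi e U)]
  exact integrable_finset_sum _
    (fun i _ => Integrable.const_mul (integrable_xi_conj μ e he i) _)

lemma integral_cip_both (hd : 1 ≤ d) (e : Fin d → ℂ) (he : ∑ i, ‖e i‖ ^ 2 = 1)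
    (O : Matrix (Fin d) (Fin d) ℂ) :
    ∫ U, cip (xi e U) (O *ᵥ xi e U) ∂μ = O.trace / (d : ℂ) := by
  have hrep : ∀ U, cip (xi e U) (O *ᵥ xi e U)
      = ∑ i, ∑ j, O i j * ((starRingEnd ℂ) (xi e U i) * xi e U j) :=
    fun U => cip_rep_both O (xi e U)
  rw [integral_congr_ae (Filter.Eventually.of_forall hrep),
    integral_finset_sum _ (fun i _ => integrable_finset_sum _
      (fun j _ => Integrable.const_mul (integrable_xi_mul μ e he i j) (O i j)))]
  have hinner : ∀ i : Fin d, (∑ j, ∫ U, O i j * ((starRingEnd ℂ) (xi e U i) * xi e U j) ∂μ)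
      = O i i / (d : ℂ) := by
    intro i
    rw [Finset.sum_eq_single i]
    · rw [integral_const_mul, integral_xi_diag μ hd e he i]
      ring
    · intro j _ hji
      rw [integral_const_mul, integral_xi_off μ e (Ne.symm hji), mul_zero]
    · simp
  rw [Finset.sum_congr rfl (fun i _ => by
    rw [integral_finset_sum _
      (fun j _ => Integrable.const_mul (integrable_xi_mul μ e he i j) (O i j)), hinner i])]
  rw [Matrix.trace, ← Finset.sum_div]
  rfl

lemma integrable_cip_both (e : Fin d → ℂ) (he : ∑ i, ‖e i‖ ^ 2 = 1)
    (O : Matrix (Fin d) (Fin d) ℂ) :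
    Integrable (fun U => cip (xi e U) (O *ᵥ xi e U)) μ := by
  rw [show (fun U => cip (xi e U) (O *ᵥ xi e U))
      = fun U => ∑ i, ∑ j, O i j * ((starRingEnd ℂ) (xi e U i) * xi e U j) from
    funext fun U => cip_rep_both O (xi e U)]
  exact integrable_finset_sum _ (fun i _ => integrable_finset_sum _
    (fun j _ => Integrable.const_mul (integrable_xi_mul μ e he i j) _))

end Meas

lemma cip_add_left (x y z : Fin d → ℂ) : cip (x + y) z = cip x z + cip y z := by
  unfold cip
  rw [← Finset.sum_add_distrib]
  exact Finset.sum_congr rfl fun i _ => by simp [map_add]; ring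

lemma cip_add_right (x y z : Fin d → ℂ) : cip x (y + z) = cip x y + cip x z := by
  unfold cip
  rw [← Finset.sum_add_distrib]
  exact Finset.sum_congr rfl fun i _ => by simp; ring

lemma cip_smul_left (r : ℝ) (x z : Fin d → ℂ) : cip (r • x) z = (r : ℂ) * cip x z := by
  unfold cip
  rw [Finset.mul_sum]
  refine Finset.sum_congr rfl fun i _ => ?_
  simp [Complex.real_smul, _root_.map_mul, Complex.conj_ofReal]
  ring

lemma cip_smul_right (r : ℝ) (x z : Fin d → ℂ) : cip x (r • z) = (r : ℂ) * cip x z := by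
  unfold cip
  rw [Finset.mul_sum]
  refine Finset.sum_congr rfl fun i _ => ?_
  simp [Complex.real_smul]
  ring

end Stmt15Aux

open Stmt15Aux

/-- Expected energy of an isotropically perturbed state (end of Appendix C of
the paper): for Hermitian `O`, unit `ψ`, `ε ∈ [0,1]` and
`ψ̃ = √(1−ε) ψ + √ε ξ` with Haar-random `ξ = U *ᵥ e`,
`E[⟨ψ̃, O ψ̃⟩] = (1−ε)·⟨ψ, O ψ⟩ + ε·Tr(O)/d`. In particular, if `ψ` is a unit
eigenvector of `O` with real eigenvalue `E`, this equals `(1−ε)·E + ε·Tr(O)/d`. -/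
theorem stmt15 (d : ℕ) (hd : 1 ≤ d)
    [MeasurableSpace (Matrix.unitaryGroup (Fin d) ℂ)]
    [BorelSpace (Matrix.unitaryGroup (Fin d) ℂ)]
    (μ : Measure (Matrix.unitaryGroup (Fin d) ℂ))
    [μ.IsHaarMeasure] [IsProbabilityMeasure μ]
    (e : Fin d → ℂ) (he : ∑ i, ‖e i‖ ^ 2 = 1)
    (O : Matrix (Fin d) (Fin d) ℂ) (hO : O.IsHermitian)
    (ψ : Fin d → ℂ) (hψ : ∑ i, ‖ψ i‖ ^ 2 = 1)
    (ε : ℝ) (hε0 : 0 ≤ ε) (hε1 : ε ≤ 1) :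
    (∫ U : Matrix.unitaryGroup (Fin d) ℂ,
        (cip (Real.sqrt (1 - ε) • ψ + Real.sqrt ε • ((U : Matrix (Fin d) (Fin d) ℂ) *ᵥ e))
          (O *ᵥ (Real.sqrt (1 - ε) • ψ
            + Real.sqrt ε • ((U : Matrix (Fin d) (Fin d) ℂ) *ᵥ e)))).re ∂μ
      = (1 - ε) * (cip ψ (O *ᵥ ψ)).re + ε * O.trace.re / (d : ℝ)) ∧
    ∀ E : ℝ, O *ᵥ ψ = (E : ℂ) • ψ →
      ∫ U : Matrix.unitaryGroup (Fin d) ℂ,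
        (cip (Real.sqrt (1 - ε) • ψ + Real.sqrt ε • ((U : Matrix (Fin d) (Fin d) ℂ) *ᵥ e))
          (O *ᵥ (Real.sqrt (1 - ε) • ψ
            + Real.sqrt ε • ((U : Matrix (Fin d) (Fin d) ℂ) *ᵥ e)))).re ∂μ
      = (1 - ε) * E + ε * O.trace.re / (d : ℝ) := by
  set a : ℝ := Real.sqrt (1 - ε) with ha
  set b : ℝ := Real.sqrt ε with hb
  set F : Matrix.unitaryGroup (Fin d) ℂ → ℂ :=
    fun U => cip (a • ψ + b • xi e U) (O *ᵥ (a • ψ + b • xi e U)) with hF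
  have haa : (a : ℂ) * (a : ℂ) = ((1 - ε : ℝ) : ℂ) := by
    rw [← Complex.ofReal_mul, ha, Real.mul_self_sqrt (by linarith)]
  have hbb : (b : ℂ) * (b : ℂ) = ((ε : ℝ) : ℂ) := by
    rw [← Complex.ofReal_mul, hb, Real.mul_self_sqrt hε0]
  have hsplit : ∀ U, F U = ((1 - ε : ℝ) : ℂ) * cip ψ (O *ᵥ ψ)
      + ((a * b : ℝ) : ℂ) * cip ψ (O *ᵥ xi e U)
      + ((a * b : ℝ) : ℂ) * cip (xi e U) (O *ᵥ ψ)
      + ((ε : ℝ) : ℂ) * cip (xi e U) (O *ᵥ xi e U) := by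
    intro U
    rw [hF]
    simp only [Matrix.mulVec_add, Matrix.mulVec_smul, cip_add_left, cip_add_right,
      cip_smul_left, cip_smul_right, Complex.ofReal_mul]
    linear_combination (cip ψ (O *ᵥ ψ)) * haa
      + (cip (xi e U) (O *ᵥ xi e U)) * hbb
  have hInt : Integrable F μ := by
    rw [show F = fun U => ((1 - ε : ℝ) : ℂ) * cip ψ (O *ᵥ ψ)
        + ((a * b : ℝ) : ℂ) * cip ψ (O *ᵥ xi e U)
        + ((a * b : ℝ) : ℂ) * cip (xi e U) (O *ᵥ ψ)
        + ((ε : ℝ) : ℂ) * cip (xi e U) (O *ᵥ xi e U) from funext hsplit]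
    exact ((((integrable_const _).add
      ((integrable_cip_left μ e he ψ O).const_mul _)).add
      ((integrable_cip_right μ e he ψ O).const_mul _)).add
      ((integrable_cip_both μ e he O).const_mul _))
  have hIntF : ∫ U, F U ∂μ = ((1 - ε : ℝ) : ℂ) * cip ψ (O *ᵥ ψ)
      + ((ε : ℝ) : ℂ) * (O.trace / (d : ℂ)) := by
    rw [integral_congr_ae (Filter.Eventually.of_forall hsplit)]
    have i1 : Integrable (fun _ : Matrix.unitaryGroup (Fin d) ℂ =>
        ((1 - ε : ℝ) : ℂ) * cip ψ (O *ᵥ ψ)) μ := integrable_const _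
    have i2 : Integrable (fun U => ((a * b : ℝ) : ℂ) * cip ψ (O *ᵥ xi e U)) μ :=
      (integrable_cip_left μ e he ψ O).const_mul _
    have i3 : Integrable (fun U => ((a * b : ℝ) : ℂ) * cip (xi e U) (O *ᵥ ψ)) μ :=
      (integrable_cip_right μ e he ψ O).const_mul _
    have i4 : Integrable (fun U => ((ε : ℝ) : ℂ) * cip (xi e U) (O *ᵥ xi e U)) μ :=
      (integrable_cip_both μ e he O).const_mul _
    have i12 : Integrable (fun U => ((1 - ε : ℝ) : ℂ) * cip ψ (O *ᵥ ψ)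
        + ((a * b : ℝ) : ℂ) * cip ψ (O *ᵥ xi e U)) μ := i1.add i2
    have i123 : Integrable (fun U => ((1 - ε : ℝ) : ℂ) * cip ψ (O *ᵥ ψ)
        + ((a * b : ℝ) : ℂ) * cip ψ (O *ᵥ xi e U)
        + ((a * b : ℝ) : ℂ) * cip (xi e U) (O *ᵥ ψ)) μ := i12.add i3
    rw [integral_add i123 i4, integral_add i12 i3, integral_add i1 i2]
    rw [integral_const, integral_const_mul, integral_const_mul, integral_const_mul,
      integral_cip_left μ e he ψ O, integral_cip_right μ e he ψ O,
      integral_cip_both μ hd e he O]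
    simp
  have hmain : ∫ U : Matrix.unitaryGroup (Fin d) ℂ,
      (cip (Real.sqrt (1 - ε) • ψ + Real.sqrt ε • ((U : Matrix (Fin d) (Fin d) ℂ) *ᵥ e))
        (O *ᵥ (Real.sqrt (1 - ε) • ψ
          + Real.sqrt ε • ((U : Matrix (Fin d) (Fin d) ℂ) *ᵥ e)))).re ∂μ
      = (1 - ε) * (cip ψ (O *ᵥ ψ)).re + ε * O.trace.re / (d : ℝ) := by
    have h1 : ∫ U, (F U).re ∂μ = (∫ U, F U ∂μ).re := by
      simpa using integral_re (𝕜 := ℂ) hInt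
    have h2 : (∫ U, (F U).re ∂μ)
        = ∫ U : Matrix.unitaryGroup (Fin d) ℂ,
          (cip (Real.sqrt (1 - ε) • ψ + Real.sqrt ε • ((U : Matrix (Fin d) (Fin d) ℂ) *ᵥ e))
            (O *ᵥ (Real.sqrt (1 - ε) • ψ
              + Real.sqrt ε • ((U : Matrix (Fin d) (Fin d) ℂ) *ᵥ e)))).re ∂μ := rfl
    rw [← h2, h1, hIntF]
    have hd' : (0 : ℝ) < (d : ℝ) := by exact_mod_cast Nat.pos_of_ne_zero (by omega)
    simp only [Complex.add_re, Complex.re_ofReal_mul]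
    rw [show (O.trace / (d : ℂ)) = O.trace / ((d : ℝ) : ℂ) by norm_cast,
      Complex.div_ofReal_re]
    ring
  refine ⟨hmain, fun E heig => ?_⟩
  rw [hmain, heig]
  have hcc : cip ψ ((E : ℂ) • ψ) = (E : ℂ) := by
    have : cip ψ ((E : ℂ) • ψ) = (E : ℂ) * cip ψ ψ := by
      unfold cip
      rw [Finset.mul_sum]
      exact Finset.sum_congr rfl fun i _ => by simp; ring
    rw [this, cip_self, hψ, Complex.ofReal_one, mul_one]
  rw [hcc]
  simp
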